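/- Let 0 < γ < γ' be arbitrary and set α = γ/γ' ∈ (0,1). Let W' be a random variable with the Weibull distribution with shape parameter γ' and let S be a positive strictly stable random variable with exponent α, independent of W'. Then W'·S^{-1/γ'} has the Weibull distribution with shape parameter γ: P(W'·S^{-1/γ'} > x) = exp(-x^γ) for all x ≥ 0. -/

import Mathlib

open MeasureTheory ProbabilityTheory Filter Set
open scoped Topology ENNReal

/-- Let `0 < γ < γ'` and `α = γ/γ' ∈ (0,1)`. If `W'` has the Weibull
distribution with shape parameter `γ'` and `S` is an independent positive strictly
stable random variable with exponent `α`, then `W'·S^(-1/γ')` has the Weibull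
distribution with shape parameter `γ`: `P(W'·S^(-1/γ') > x) = exp (-x^γ)` for `x ≥ 0`. -/
theorem weibull_scale_mixture_of_weibull
    {Ω : Type*} [MeasurableSpace Ω] (P : Measure Ω) [IsProbabilityMeasure P]
    (γ γ' : ℝ) (hγ0 : 0 < γ) (hγγ' : γ < γ')
    (W' S : Ω → ℝ) (hW'm : Measurable W') (hSm : Measurable S)
    (hW' : ∀ x : ℝ, 0 ≤ x → P {ω | x < W' ω} = ENNReal.ofReal (Real.exp (-(x ^ γ'))))
    (hSnn : ∀ᵐ ω ∂P, 0 ≤ S ω)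
    (hS : ∀ s : ℝ, 0 ≤ s →
      ∫ ω, Real.exp (-(s * S ω)) ∂P = Real.exp (-(s ^ (γ / γ'))))
    (hindep : IndepFun W' S P) :
    ∀ x : ℝ, 0 ≤ x →
      P {ω | x < W' ω * (S ω) ^ (-(1 / γ'))} = ENNReal.ofReal (Real.exp (-(x ^ γ))) := by
  have hγ'0 : (0:ℝ) < γ' := hγ0.trans hγγ'
  have hα0 : 0 < γ / γ' := div_pos hγ0 hγ'0
  -- integrability of the Laplace functionals
  have hInt : ∀ s : ℝ, 0 ≤ s → Integrable (fun ω => Real.exp (-(s * S ω))) P := by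
    intro s hs
    refine (integrable_const (1:ℝ)).mono'
      ((hSm.const_mul s).neg.exp.aestronglyMeasurable) ?_
    filter_upwards [hSnn] with ω hω
    rw [Real.norm_eq_abs, abs_of_pos (Real.exp_pos _)]
    exact Real.exp_le_one_iff.2 (neg_nonpos.2 (mul_nonneg hs hω))
  -- lintegral form of the Laplace transform hypothesis
  have hSlin : ∀ s : ℝ, 0 ≤ s →
      ∫⁻ ω, ENNReal.ofReal (Real.exp (-(s * S ω))) ∂P
        = ENNReal.ofReal (Real.exp (-(s ^ (γ / γ')))) := by
    intro s hs
    rw [← ofReal_integral_eq_lintegral_ofReal (hInt s hs)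
      (Eventually.of_forall fun ω => (Real.exp_pos _).le), hS s hs]
  -- S is a.e. strictly positive
  have hS0 : P {ω | S ω = 0} = 0 := by
    have hbound : ∀ n : ℕ, P {ω | S ω = 0}
        ≤ ENNReal.ofReal (Real.exp (-((n:ℝ) ^ (γ / γ')))) := by
      intro n
      rw [← hSlin n n.cast_nonneg]
      have hmeas : MeasurableSet {ω | S ω = 0} := hSm (measurableSet_singleton 0)
      calc P {ω | S ω = 0}
          = ∫⁻ _ω in {ω | S ω = 0}, 1 ∂P := (setLIntegral_one _).symm
        _ = ∫⁻ ω in {ω | S ω = 0}, ENNReal.ofReal (Real.exp (-((n:ℝ) * S ω))) ∂P := by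
            refine setLIntegral_congr_fun hmeas (fun ω hω => ?_)
            simp only [Set.mem_setOf_eq] at hω
            rw [hω, mul_zero, neg_zero, Real.exp_zero, ENNReal.ofReal_one]
        _ ≤ ∫⁻ ω, ENNReal.ofReal (Real.exp (-((n:ℝ) * S ω))) ∂P :=
            setLIntegral_le_lintegral _ _
    have htend : Tendsto (fun n : ℕ => ENNReal.ofReal (Real.exp (-((n:ℝ) ^ (γ / γ')))))
        atTop (𝓝 0) := by
      rw [← ENNReal.ofReal_zero]
      apply ENNReal.tendsto_ofReal
      apply Real.tendsto_exp_atBot.comp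
      apply tendsto_neg_atTop_atBot.comp
      exact (tendsto_rpow_atTop hα0).comp tendsto_natCast_atTop_atTop
    have := ge_of_tendsto' htend hbound
    simpa using this
  have hSne : ∀ᵐ ω ∂P, S ω ≠ 0 := by
    rw [ae_iff]
    simpa using hS0
  have hSpos : ∀ᵐ ω ∂P, 0 < S ω := by
    filter_upwards [hSnn, hSne] with ω h1 h2
    exact lt_of_le_of_ne h1 (Ne.symm h2)
  intro x hx
  -- rewrite the event via the pair map (S, W')
  have hpairm : Measurable (fun ω => (S ω, W' ω)) := hSm.prodMk hW'm
  have hsetm : MeasurableSet {p : ℝ × ℝ | x < p.2 * p.1 ^ (-(1 / γ'))} := by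
    apply measurableSet_lt measurable_const
    exact measurable_snd.mul (measurable_fst.pow measurable_const)
  have hmap : Measure.map (fun ω => (S ω, W' ω)) P = (P.map S).prod (P.map W') :=
    (indepFun_iff_map_prod_eq_prod_map_map hSm.aemeasurable hW'm.aemeasurable).1 hindep.symm
  have h1 : P {ω | x < W' ω * (S ω) ^ (-(1 / γ'))}
      = ((P.map S).prod (P.map W')) {p : ℝ × ℝ | x < p.2 * p.1 ^ (-(1 / γ'))} := by
    rw [← hmap, Measure.map_apply hpairm hsetm]
    rfl
  rw [h1, Measure.prod_apply hsetm]
  -- compute the inner measure for a.e. s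
  have hae : ∀ᵐ s ∂(P.map S), 0 < s := (ae_map_iff hSm.aemeasurable measurableSet_Ioi).2 hSpos
  have h2 : ∫⁻ s, (P.map W') (Prod.mk s ⁻¹' {p : ℝ × ℝ | x < p.2 * p.1 ^ (-(1 / γ'))})
        ∂(P.map S)
      = ∫⁻ s, ENNReal.ofReal (Real.exp (-(x ^ γ' * s))) ∂(P.map S) := by
    refine lintegral_congr_ae ?_
    filter_upwards [hae] with s hs
    have hsp : (0:ℝ) < s ^ (1 / γ') := Real.rpow_pos_of_pos hs _
    have hset : Prod.mk s ⁻¹' {p : ℝ × ℝ | x < p.2 * p.1 ^ (-(1 / γ'))}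
        = {w : ℝ | x * s ^ (1 / γ') < w} := by
      ext w
      simp only [Set.mem_preimage, Set.mem_setOf_eq]
      rw [Real.rpow_neg hs.le, ← div_eq_mul_inv, lt_div_iff₀ hsp]
    have hpre : W' ⁻¹' {w : ℝ | x * s ^ (1 / γ') < w} = {ω | x * s ^ (1 / γ') < W' ω} := rfl
    rw [hset, Measure.map_apply hW'm
      (show MeasurableSet {w : ℝ | x * s ^ (1 / γ') < w} from measurableSet_Ioi), hpre,
      hW' _ (mul_nonneg hx hsp.le)]
    congr 3
    rw [Real.mul_rpow hx hsp.le, ← Real.rpow_mul hs.le,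
      one_div_mul_cancel hγ'0.ne', Real.rpow_one]
  rw [h2, lintegral_map (by
      exact (ENNReal.measurable_ofReal.comp
        ((measurable_id.const_mul (x ^ γ')).neg.exp))) hSm]
  rw [hSlin _ (Real.rpow_nonneg hx _)]
  congr 2
  rw [← Real.rpow_mul hx, mul_div_cancel₀ _ hγ'0.ne']
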